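/- For all η ∈ (0, 2π), the quantity (16 - 5π)/√((16-5π)² + 128(16+15π)(1-cos η) + 256(16-5π)(1-cos η)²) is strictly less than 1/(5 - 4·cos η). -/

import Mathlib

open Real

theorem stmt_1 (η : ℝ) (hη : η ∈ Set.Ioo 0 (2 * π)) :
    (16 - 5 * π) /
      Real.sqrt ((16 - 5 * π) ^ 2 + 128 * (16 + 15 * π) * (1 - Real.cos η)
        + 256 * (16 - 5 * π) * (1 - Real.cos η) ^ 2)
      < 1 / (5 - 4 * Real.cos η) := by
  obtain ⟨h1, h2⟩ := hη
  have hpi1 : π < 3.15 := pi_lt_d2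
  have hpi2 : (3.141 : ℝ) < π := by linarith [pi_gt_d6]
  have hcne : Real.cos η ≠ 1 := by
    intro h
    have := (Real.cos_eq_one_iff_of_lt_of_lt (by linarith [pi_pos]) h2).1 h
    linarith
  have hc : Real.cos η < 1 := lt_of_le_of_ne (Real.cos_le_one η) hcne
  have hc' : -1 ≤ Real.cos η := Real.neg_one_le_cos η
  set t : ℝ := 1 - Real.cos η with ht
  have htpos : 0 < t := by simp [ht]; linarith
  have hA : (0:ℝ) < 16 - 5 * π := by linarith
  have hB : (0:ℝ) < 5 - 4 * Real.cos η := by linarith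
  have hkey : (16 - 5 * π) * (5 - 4 * Real.cos η)
      < Real.sqrt ((16 - 5 * π) ^ 2 + 128 * (16 + 15 * π) * t + 256 * (16 - 5 * π) * t ^ 2) := by
    rw [show (5 - 4 * Real.cos η) = 1 + 4 * t by rw [ht]; ring]
    apply Real.lt_sqrt_of_sq_lt
    have h8 : 8 * (16 - 5 * π) ^ 2 < 128 * (16 + 15 * π) := by nlinarith
    have h16 : 16 * (16 - 5 * π) ^ 2 ≤ 256 * (16 - 5 * π) := by nlinarith
    nlinarith [sq_nonneg t, mul_pos htpos htpos]
  have hsq : (0:ℝ) < Real.sqrt ((16 - 5 * π) ^ 2 + 128 * (16 + 15 * π) * t + 256 * (16 - 5 * π) * t ^ 2) :=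
    lt_trans (by positivity) hkey
  rw [div_lt_div_iff₀ hsq hB]
  linarith
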